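/- For integers a and c with 1 ≤ c and 2c ≤ a, the adjacency matrix of the Kneser graph K_{a,c} has maximal rank; that is, this square 0–1 matrix of size binom(a, c) is invertible over ℚ (its rank equals binom(a, c)). -/

import Mathlib

open Finset in
def kf (a c : ℕ) : ℕ → ℚ
  | m => ((if m = 0 then 1 else 0) -
      ∑ j ∈ (Finset.range m).attach,
        ((m.choose j.1 * ((a - c - m).choose (c - j.1)) : ℕ) : ℚ) * kf a c j.1) /
    (((a - c - m).choose (c - m) : ℕ) : ℚ)
  decreasing_by exact Finset.mem_range.mp j.2

lemma kf_key (a c : ℕ) (hac : 2 * c ≤ a) (m : ℕ) (hm : m ≤ c) :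
    ∑ j ∈ Finset.range (m + 1),
      ((m.choose j * ((a - c - m).choose (c - j)) : ℕ) : ℚ) * kf a c j
      = if m = 0 then 1 else 0 := by
  have hpos : 0 < (a - c - m).choose (c - m) := by
    apply Nat.choose_pos; omega
  rw [Finset.sum_range_succ, Nat.choose_self, kf]
  rw [← Finset.sum_attach (Finset.range m)]
  field_simp
  push_cast; ring

open Finset in
lemma counting (a c : ℕ) (hac : 2 * c ≤ a) (x z : Finset (Fin a))
    (hx : x.card = c) (hz : z.card = c) :
    ∑ y ∈ (xᶜ).powersetCard c, kf a c ((y ∩ z).card)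
      = ∑ j ∈ Finset.range ((c - (x ∩ z).card) + 1),
          (((c - (x ∩ z).card).choose j *
            ((a - c - (c - (x ∩ z).card)).choose (c - j)) : ℕ) : ℚ) * kf a c j := by
  set r := (x ∩ z).card with hr
  have hrc : r ≤ c := hx ▸ card_le_card (inter_subset_left)
  set m := c - r with hm
  have hzx : (z \ x).card = m := by
    have := Finset.card_inter_add_card_sdiff z x
    rw [Finset.inter_comm] at this
    omega
  have hxz : ((x ∪ z)ᶜ).card = a - c - m := by
    have h1 := Finset.card_union_add_card_inter x z
    have h2 : ((x ∪ z)ᶜ).card = a - (x ∪ z).card := by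
      rw [Finset.card_compl, Fintype.card_fin]
    omega
  have step1 : ∑ y ∈ (xᶜ).powersetCard c, kf a c ((y ∩ z).card)
      = ∑ p ∈ ((z \ x).powerset).sigma
          (fun u => ((x ∪ z)ᶜ).powersetCard (c - u.card)),
          kf a c p.1.card := by
    apply Finset.sum_nbij' (fun y => (⟨y ∩ z, y \ z⟩ : Σ _ : Finset (Fin a), Finset (Fin a)))
      (fun p => p.1 ∪ p.2)
    · intro y hy
      rw [Finset.mem_powersetCard] at hy
      obtain ⟨hysub, hycard⟩ := hy
      have hdisj : Disjoint x y := by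
        rw [← le_compl_iff_disjoint_left]; exact hysub
      refine Finset.mem_sigma.mpr ⟨?_, ?_⟩
      · rw [Finset.mem_powerset]
        show y ∩ z ⊆ z \ x
        rw [Finset.subset_sdiff]
        exact ⟨inter_subset_right, (hdisj.mono_right inter_subset_left).symm⟩
      · rw [Finset.mem_powersetCard]
        constructor
        · show y \ z ⊆ (x ∪ z)ᶜ
          intro t ht
          rw [Finset.mem_compl, Finset.mem_union]
          rw [Finset.mem_sdiff] at ht
          push_neg
          refine ⟨fun hxt => ?_, ht.2⟩
          exact (Finset.disjoint_left.mp hdisj hxt) ht.1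
        · show (y \ z).card = c - (y ∩ z).card
          have := Finset.card_inter_add_card_sdiff y z
          omega
    · intro p hp
      rw [Finset.mem_sigma, Finset.mem_powerset, Finset.mem_powersetCard] at hp
      obtain ⟨h1, ⟨h2, h3⟩⟩ := hp
      have hcard1 : p.1.card ≤ m := hzx ▸ card_le_card h1
      have hdisj : Disjoint p.1 p.2 := by
        have hd : Disjoint z ((x ∪ z)ᶜ) := by
          rw [disjoint_compl_right_iff]; exact subset_union_right
        exact (hd.mono_left (h1.trans sdiff_subset)).mono_right h2
      rw [Finset.mem_powersetCard]
      constructor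
      · apply Finset.union_subset
        · intro t ht
          rw [Finset.mem_compl]
          have := h1 ht
          rw [Finset.mem_sdiff] at this
          exact this.2
        · intro t ht
          have := h2 ht
          rw [Finset.mem_compl, Finset.mem_union] at this
          rw [Finset.mem_compl]
          exact fun hxt => this (Or.inl hxt)
      · rw [Finset.card_union_of_disjoint hdisj, h3]; omega
    · intro y hy
      show (y ∩ z) ∪ (y \ z) = y
      ext t
      simp only [Finset.mem_union, Finset.mem_inter, Finset.mem_sdiff]
      tauto
    · intro p hp
      rw [Finset.mem_sigma, Finset.mem_powerset, Finset.mem_powersetCard] at hp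
      obtain ⟨h1, ⟨h2, h3⟩⟩ := hp
      have hp1z : p.1 ⊆ z := h1.trans sdiff_subset
      have hp2z : Disjoint p.2 z := by
        have hd : Disjoint ((x ∪ z)ᶜ) z := by
          rw [disjoint_compl_left_iff]; exact subset_union_right
        exact hd.mono_left h2
      have e1 : (p.1 ∪ p.2) ∩ z = p.1 := by
        rw [Finset.union_inter_distrib_right, Finset.inter_eq_left.mpr hp1z,
          Finset.disjoint_iff_inter_eq_empty.mp hp2z, Finset.union_empty]
      have e2 : (p.1 ∪ p.2) \ z = p.2 := by
        rw [Finset.union_sdiff_distrib, Finset.sdiff_eq_empty_iff_subset.mpr hp1z,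
          Finset.empty_union, Finset.sdiff_eq_self_iff_disjoint.mpr hp2z]
      exact Sigma.ext e1 (heq_of_eq e2)
    · intro y hy; rfl
  rw [step1]
  calc ∑ p ∈ ((z \ x).powerset).sigma
          (fun u => ((x ∪ z)ᶜ).powersetCard (c - u.card)), kf a c p.1.card
      = ∑ u ∈ (z \ x).powerset,
          ∑ _v ∈ ((x ∪ z)ᶜ).powersetCard (c - u.card), kf a c u.card :=
        Finset.sum_sigma _ _ _
    _ = ∑ u ∈ (z \ x).powerset,
          (((a - c - m).choose (c - u.card) : ℕ) : ℚ) * kf a c u.card := by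
        refine Finset.sum_congr rfl fun u hu => ?_
        rw [Finset.sum_const, Finset.card_powersetCard, hxz, nsmul_eq_mul]
    _ = ∑ j ∈ Finset.range (m + 1), ∑ u ∈ Finset.powersetCard j (z \ x),
          (((a - c - m).choose (c - u.card) : ℕ) : ℚ) * kf a c u.card := by
        rw [Finset.sum_powerset, hzx]
    _ = ∑ j ∈ Finset.range (m + 1),
          ((m.choose j * ((a - c - m).choose (c - j)) : ℕ) : ℚ) * kf a c j := by
        refine Finset.sum_congr rfl fun j hj => ?_
        have hconst : ∀ u ∈ Finset.powersetCard j (z \ x),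
            (((a - c - m).choose (c - u.card) : ℕ) : ℚ) * kf a c u.card
              = (((a - c - m).choose (c - j) : ℕ) : ℚ) * kf a c j := fun u hu => by
          rw [(Finset.mem_powersetCard.mp hu).2]
        rw [Finset.sum_congr rfl hconst, Finset.sum_const, Finset.card_powersetCard, hzx,
          nsmul_eq_mul]
        push_cast; ring

/-- **Theorem (Kneser graphs: adjacency matrix has maximal rank).**
For `1 ≤ c` and `2c ≤ a`, the adjacency matrix of the Kneser graph `K_{a,c}` —
the 0–1 matrix whose rows and columns are indexed by the `c`-element subsets of
an `a`-element set, with entry `1` at `(x, y)` iff `x ∩ y = ∅` — has maximal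
rank over `ℚ`: its rank equals `binom(a, c)`, i.e. this square matrix is
invertible over `ℚ`. -/
theorem kneser_adjacency_max_rank (a c : ℕ) (hc : 1 ≤ c) (hac : 2 * c ≤ a) :
    Matrix.rank
      (Matrix.of (fun (x y : {s : Finset (Fin a) // s.card = c}) =>
        if (x : Finset (Fin a)) ∩ (y : Finset (Fin a)) = ∅ then (1 : ℚ) else 0))
      = a.choose c := by
  set M : Matrix {s : Finset (Fin a) // s.card = c} {s : Finset (Fin a) // s.card = c} ℚ :=
    Matrix.of (fun x y => if (x : Finset (Fin a)) ∩ (y : Finset (Fin a)) = ∅ then (1 : ℚ) else 0)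
    with hM
  set E : Matrix {s : Finset (Fin a) // s.card = c} {s : Finset (Fin a) // s.card = c} ℚ :=
    Matrix.of (fun x y => kf a c (((x : Finset (Fin a)) ∩ (y : Finset (Fin a))).card)) with hE
  have key : M * E = 1 := by
    ext x z
    rw [Matrix.mul_apply, Matrix.one_apply]
    have expand : ∀ y : {s : Finset (Fin a) // s.card = c},
        M x y * E y z = (if (x : Finset (Fin a)) ∩ (y : Finset (Fin a)) = ∅
          then kf a c (((y : Finset (Fin a)) ∩ (z : Finset (Fin a))).card) else 0) := by
      intro y
      rw [hM, hE]
      simp only [Matrix.of_apply]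
      rw [boole_mul]
    rw [Finset.sum_congr rfl fun y _ => expand y]
    rw [← Finset.sum_subtype (Finset.powersetCard c Finset.univ)
      (fun s => Finset.mem_powersetCard_univ)
      (fun y => if (x : Finset (Fin a)) ∩ y = ∅
        then kf a c ((y ∩ (z : Finset (Fin a))).card) else 0)]
    rw [← Finset.sum_filter]
    have hfilter : (Finset.powersetCard c Finset.univ).filter
        (fun y => (x : Finset (Fin a)) ∩ y = ∅)
        = ((x : Finset (Fin a))ᶜ).powersetCard c := by
      ext y
      simp only [Finset.mem_filter, Finset.mem_powersetCard_univ, Finset.mem_powersetCard]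
      constructor
      · rintro ⟨h1, h2⟩
        refine ⟨fun t ht => ?_, h1.2⟩
        rw [Finset.mem_compl]
        intro hxt
        have : t ∈ (x : Finset (Fin a)) ∩ y := Finset.mem_inter.mpr ⟨hxt, ht⟩
        simp [h2] at this
      · rintro ⟨h1, h2⟩
        refine ⟨⟨Finset.subset_univ y, h2⟩, ?_⟩
        rw [← Finset.disjoint_iff_inter_eq_empty, Finset.disjoint_left]
        intro t hxt hyt
        exact (Finset.mem_compl.mp (h1 hyt)) hxt
    rw [hfilter, counting a c hac _ _ x.2 z.2,
      kf_key a c hac (c - ((x : Finset (Fin a)) ∩ (z : Finset (Fin a))).card) (by omega)]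
    have hrc : ((x : Finset (Fin a)) ∩ (z : Finset (Fin a))).card ≤ c := by
      exact le_of_le_of_eq (Finset.card_le_card Finset.inter_subset_left) x.2
    congr 1
    rw [eq_iff_iff]
    constructor
    · intro h
      have hre : ((x : Finset (Fin a)) ∩ (z : Finset (Fin a))).card = c := by omega
      have e1 : (x : Finset (Fin a)) ∩ (z : Finset (Fin a)) = x :=
        Finset.eq_of_subset_of_card_le Finset.inter_subset_left (by rw [hre, x.2])
      have e2 : (x : Finset (Fin a)) ∩ (z : Finset (Fin a)) = z :=
        Finset.eq_of_subset_of_card_le Finset.inter_subset_right (by rw [hre, z.2])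
      exact Subtype.ext (e1.symm.trans e2)
    · intro h
      rw [h, Finset.inter_self, z.2]
      omega
  have hdet : IsUnit M.det :=
    IsUnit.of_mul_eq_one E.det (by rw [← Matrix.det_mul, key, Matrix.det_one])
  rw [Matrix.rank_of_isUnit M ((Matrix.isUnit_iff_isUnit_det M).mpr hdet),
    Fintype.card_finset_len, Fintype.card_fin]
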